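/- Let W be a binary-input channel with finite output alphabet 𝒴 such that W(y|x) > 0 for all y ∈ 𝒴 and x ∈ {0,1}, let Z = Z(W), and let k ≥ 1. Let (Y_z)_{z∈𝔽₂^k} be i.i.d. with each Y_z distributed according to W(·|0), and set L(z) = ln(W(Y_z|0)/W(Y_z|1)). Then the probability that there exists z ∈ 𝔽₂^k such that ∑_{z' ∈ 𝔽₂^k, z' ≠ z} L(z') < 0 is at most 2^k · Z^{2^k − 1}. -/
import Mathlib

open Finset

lemma sum_biUnion_le_real {α β : Type*} [DecidableEq α] [DecidableEq β]
    (s : Finset β) (t : β → Finset α) (f : α → ℝ) (hf : ∀ a, 0 ≤ f a) :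
    ∑ a ∈ s.biUnion t, f a ≤ ∑ b ∈ s, ∑ a ∈ t b, f a := by
  induction s using Finset.induction_on with
  | empty => simp
  | @insert b s hb ih =>
    rw [Finset.biUnion_insert, Finset.sum_insert hb]
    calc ∑ a ∈ t b ∪ s.biUnion t, f a
        ≤ ∑ a ∈ t b, f a + ∑ a ∈ s.biUnion t, f a := by
          have h := Finset.sum_union_inter (s₁ := t b) (s₂ := s.biUnion t) (f := f)
          have h2 : 0 ≤ ∑ a ∈ t b ∩ s.biUnion t, f a :=
            Finset.sum_nonneg fun a _ => hf a
          linarith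
      _ ≤ ∑ a ∈ t b, f a + ∑ b ∈ s, ∑ a ∈ t b, f a := by linarith

open scoped Classical in
/-- For a binary-input channel `W` with finite output alphabet, strictly
positive transition probabilities, and Bhattacharyya parameter `Z`, if `(Y_z)_{z∈𝔽₂^k}` are
i.i.d. `∼ W(·|0)` and `L(z) = ln(W(Y_z|0)/W(Y_z|1))`, then the probability that some
`z ∈ 𝔽₂^k` satisfies `∑_{z' ≠ z} L(z') < 0` is at most `2^k · Z^{2^k − 1}`. -/
theorem aggregation_error_union_bound {𝒴 : Type*} [Fintype 𝒴]
    (W : Bool → 𝒴 → ℝ)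
    (hW_pos : ∀ x y, 0 < W x y)
    (hW_sum : ∀ x, ∑ y, W x y = 1)
    (k : ℕ) (hk : 1 ≤ k) :
    ∑ y ∈ Finset.univ.filter
        (fun y : (Fin k → ZMod 2) → 𝒴 =>
          ∃ z : Fin k → ZMod 2,
            ∑ z' ∈ Finset.univ.filter (fun z' : Fin k → ZMod 2 => z' ≠ z),
              Real.log (W false (y z') / W true (y z')) < 0),
      ∏ z : Fin k → ZMod 2, W false (y z)
      ≤ (2 : ℝ) ^ k *
          (∑ w : 𝒴, Real.sqrt (W false w * W true w)) ^ (2 ^ k - 1) := by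
  set A := Fin k → ZMod 2
  set Z : ℝ := ∑ w : 𝒴, Real.sqrt (W false w * W true w) with hZ
  set P : A → (A → 𝒴) → Prop := fun z y =>
    ∑ z' ∈ Finset.univ.filter (fun z' : A => z' ≠ z),
      Real.log (W false (y z') / W true (y z')) < 0 with hP
  have hcardA : Fintype.card A = 2 ^ k := by
    simp [A, Fintype.card_fun]
  have hfnonneg : ∀ y : A → 𝒴, 0 ≤ ∏ z : A, W false (y z) := fun y =>
    Finset.prod_nonneg fun z _ => (hW_pos false (y z)).le
  -- key single-z bound
  have key : ∀ z : A,
      ∑ y ∈ Finset.univ.filter (P z), ∏ z' : A, W false (y z') ≤ Z ^ (2 ^ k - 1) := by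
    intro z
    -- define the bounding function
    set g : A → 𝒴 → ℝ := fun z' w =>
      if z' = z then W false w else Real.sqrt (W false w * W true w) with hg
    have hgnonneg : ∀ z' w, 0 ≤ g z' w := by
      intro z' w
      by_cases h : z' = z
      · simp [g, h, (hW_pos false w).le]
      · simp only [g, if_neg h]; exact Real.sqrt_nonneg _
    have pointwise : ∀ y ∈ Finset.univ.filter (P z),
        ∏ z' : A, W false (y z') ≤ ∏ z' : A, g z' (y z') := by
      intro y hy
      simp only [mem_filter, hP] at hy
      have hy := hy.2
      rw [Finset.filter_ne'] at hy
      -- product of likelihood ratios < 1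
      have hprod : ∏ z' ∈ Finset.univ.erase z, (W false (y z') / W true (y z')) ≤ 1 := by
        have hpos : ∀ z' ∈ Finset.univ.erase z, 0 < W false (y z') / W true (y z') :=
          fun z' _ => div_pos (hW_pos false (y z')) (hW_pos true (y z'))
        have := Real.exp_sum (Finset.univ.erase z)
          (fun z' => Real.log (W false (y z') / W true (y z')))
        rw [Finset.prod_congr rfl (fun z' hz' => (Real.exp_log (hpos z' hz')).symm), ← this]
        calc Real.exp _ ≤ Real.exp 0 := Real.exp_le_exp.2 hy.le
          _ = 1 := Real.exp_zero
      have hW1pos : 0 < ∏ z' ∈ Finset.univ.erase z, W true (y z') :=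
        Finset.prod_pos fun z' _ => hW_pos true (y z')
      have hW0nn : 0 ≤ ∏ z' ∈ Finset.univ.erase z, W false (y z') :=
        Finset.prod_nonneg fun z' _ => (hW_pos false (y z')).le
      have hle : (∏ z' ∈ Finset.univ.erase z, W false (y z'))
          ≤ ∏ z' ∈ Finset.univ.erase z, W true (y z') := by
        rw [Finset.prod_div_distrib] at hprod
        exact (div_le_one hW1pos).1 hprod
      -- main sqrt bound on the erase-z part
      have hsq : (∏ z' ∈ Finset.univ.erase z, W false (y z'))
          ≤ ∏ z' ∈ Finset.univ.erase z, Real.sqrt (W false (y z') * W true (y z')) := by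
        have hbnn : 0 ≤ ∏ z' ∈ Finset.univ.erase z,
            Real.sqrt (W false (y z') * W true (y z')) :=
          Finset.prod_nonneg fun z' _ => Real.sqrt_nonneg _
        have h2 : (∏ z' ∈ Finset.univ.erase z, W false (y z')) ^ 2
            ≤ (∏ z' ∈ Finset.univ.erase z,
                Real.sqrt (W false (y z') * W true (y z'))) ^ 2 := by
          have hrhs : (∏ z' ∈ Finset.univ.erase z,
              Real.sqrt (W false (y z') * W true (y z'))) ^ 2
                = ∏ z' ∈ Finset.univ.erase z, (W false (y z') * W true (y z')) := by
            rw [← Finset.prod_pow]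
            exact Finset.prod_congr rfl fun z' _ =>
              Real.sq_sqrt (mul_nonneg (hW_pos false (y z')).le (hW_pos true (y z')).le)
          rw [hrhs, Finset.prod_mul_distrib, sq]
          exact mul_le_mul_of_nonneg_left hle hW0nn
        exact (pow_le_pow_iff_left₀ hW0nn hbnn two_ne_zero).1 h2
      -- assemble
      rw [← Finset.mul_prod_erase Finset.univ _ (Finset.mem_univ z),
          ← Finset.mul_prod_erase Finset.univ (fun z' => g z' (y z')) (Finset.mem_univ z)]
      simp only [g, if_pos rfl]
      refine mul_le_mul_of_nonneg_left ?_ (hW_pos false (y z)).le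
      calc ∏ z' ∈ Finset.univ.erase z, W false (y z')
          ≤ ∏ z' ∈ Finset.univ.erase z, Real.sqrt (W false (y z') * W true (y z')) := hsq
        _ = ∏ z' ∈ Finset.univ.erase z, g z' (y z') := by
            refine Finset.prod_congr rfl fun z' hz' => ?_
            rw [hg]
            simp [Finset.mem_erase.1 hz' |>.1]
    calc ∑ y ∈ Finset.univ.filter (P z), ∏ z' : A, W false (y z')
        ≤ ∑ y ∈ Finset.univ.filter (P z), ∏ z' : A, g z' (y z') :=
          Finset.sum_le_sum pointwise
      _ ≤ ∑ y : A → 𝒴, ∏ z' : A, g z' (y z') :=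
          Finset.sum_le_sum_of_subset_of_nonneg (Finset.filter_subset _ _)
            (fun y _ _ => Finset.prod_nonneg fun z' _ => hgnonneg z' (y z'))
      _ = ∏ z' : A, ∑ w : 𝒴, g z' w := (Fintype.prod_sum g).symm
      _ = (∑ w : 𝒴, g z w) * ∏ z' ∈ Finset.univ.erase z, ∑ w : 𝒴, g z' w :=
          (Finset.mul_prod_erase Finset.univ _ (Finset.mem_univ z)).symm
      _ = Z ^ (2 ^ k - 1) := by
          have h1 : ∑ w : 𝒴, g z w = 1 := by simp [g, hW_sum false]
          have h2 : ∀ z' ∈ Finset.univ.erase z, (∑ w : 𝒴, g z' w) = Z := by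
            intro z' hz'
            simp [g, Finset.mem_erase.1 hz' |>.1, hZ]
          rw [h1, one_mul, Finset.prod_congr rfl h2, Finset.prod_const,
            Finset.card_erase_of_mem (Finset.mem_univ z), Finset.card_univ, hcardA]
  -- union bound
  have hsub : Finset.univ.filter (fun y : A → 𝒴 => ∃ z : A, P z y)
      ⊆ Finset.univ.biUnion (fun z : A => Finset.univ.filter (P z)) := by
    intro y hy
    simp only [mem_filter, mem_univ, true_and] at hy
    obtain ⟨z, hz⟩ := hy
    exact Finset.mem_biUnion.2 ⟨z, Finset.mem_univ z, Finset.mem_filter.2 ⟨Finset.mem_univ y, hz⟩⟩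
  calc ∑ y ∈ Finset.univ.filter (fun y : A → 𝒴 => ∃ z : A, P z y),
        ∏ z : A, W false (y z)
      ≤ ∑ y ∈ Finset.univ.biUnion (fun z : A => Finset.univ.filter (P z)),
          ∏ z : A, W false (y z) :=
        Finset.sum_le_sum_of_subset_of_nonneg hsub (fun y _ _ => hfnonneg y)
    _ ≤ ∑ z : A, ∑ y ∈ Finset.univ.filter (P z), ∏ z' : A, W false (y z') :=
        sum_biUnion_le_real _ _ _ (fun y => hfnonneg y)
    _ ≤ ∑ _z : A, Z ^ (2 ^ k - 1) := Finset.sum_le_sum fun z _ => key z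
    _ = (2 : ℝ) ^ k * Z ^ (2 ^ k - 1) := by
        rw [Finset.sum_const, Finset.card_univ, hcardA, nsmul_eq_mul]
        push_cast
        ring
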